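/- Let V = Σ_{j=1}^n t_j q_j with monomials q_j of degree at most D, and let B be the total number of monomials appearing in the cyclic derivatives D_1 V,…,D_m V. Define Ξ₁(P) = Π(Σ_k ∂_k ΣP ♯ D_k V) on ℂ₀⟨X_1,…,X_m⟩. Then for any A > 1, Ξ₁ is bounded for ‖·‖_A with ‖Ξ₁‖_A ≤ |t| B A^{D-2}, where |t| = max_j |t_j|. In particular, ‖Ξ₁‖_A ≤ ε whenever |t| < ε/(B A^{D-2}). -/

import Mathlib

/-- Words in `m` noncommuting letters: monomials of the free algebra `ℂ⟨X_1,…,X_m⟩`. -/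
abbrev Word (m : ℕ) := List (Fin m)

/-- Noncommutative polynomials: finitely supported complex combinations of words. -/
abbrev NCPoly (m : ℕ) := Word m →₀ ℂ

/-- The tensor square, as combinations of pairs of words. -/
abbrev NCPoly₂ (m : ℕ) := (Word m × Word m) →₀ ℂ

/-- Noncommutative derivative of a monomial: `∂_k w = Σ_{w = r X_k s} r ⊗ s`. -/
noncomputable def derW {m : ℕ} (k : Fin m) (w : Word m) : NCPoly₂ m :=
  ∑ i : Fin w.length,
    if w.get i = k then Finsupp.single (w.take i.1, w.drop (i.1 + 1)) 1 else 0

/-- Noncommutative derivative `∂_k`, extended linearly. -/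
noncomputable def der {m : ℕ} (k : Fin m) : NCPoly m →ₗ[ℂ] NCPoly₂ m :=
  Finsupp.lsum ℂ fun w => LinearMap.toSpanSingleton ℂ _ (derW k w)

/-- Cyclic derivative of a monomial: `D_k w = Σ_{w = r X_k s} s r`. -/
noncomputable def cderW {m : ℕ} (k : Fin m) (w : Word m) : NCPoly m :=
  ∑ i : Fin w.length,
    if w.get i = k then Finsupp.single (w.drop (i.1 + 1) ++ w.take i.1) 1 else 0

/-- Cyclic derivative `D_k`, extended linearly. -/
noncomputable def cder {m : ℕ} (k : Fin m) : NCPoly m →ₗ[ℂ] NCPoly m :=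
  Finsupp.lsum ℂ fun w => LinearMap.toSpanSingleton ℂ _ (cderW k w)

/-- The map `Σ` dividing each monomial by its degree (and killing constants). -/
noncomputable def sig {m : ℕ} : NCPoly m →ₗ[ℂ] NCPoly m :=
  Finsupp.lsum ℂ fun w => LinearMap.toSpanSingleton ℂ _
    (if w.length = 0 then 0 else ((w.length : ℂ)⁻¹) • Finsupp.single w 1)

/-- The operation `(A ⊗ B) ♯ C = A C B`, extended bilinearly. -/
noncomputable def sharp {m : ℕ} (T : NCPoly₂ m) (P : NCPoly m) : NCPoly m :=
  T.sum fun rs c => P.sum fun u d => Finsupp.single (rs.1 ++ u ++ rs.2) (c * d)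

/-- The projection `Π` killing the constant term. -/
noncomputable def proj0 {m : ℕ} (P : NCPoly m) : NCPoly m :=
  P - Finsupp.single [] (P [])

/-- The operator `Ξ₁(P) = Π(Σ_k ∂_k Σ P ♯ D_k V)`. -/
noncomputable def Xi1 {m : ℕ} (V : NCPoly m) (P : NCPoly m) : NCPoly m :=
  proj0 (∑ k : Fin m, sharp (der k (sig P)) (cder k V))

/-- The norm `‖P‖_A = Σ_q |λ_q(P)| A^{deg q}`. -/
noncomputable def Anorm {m : ℕ} (A : ℝ) (P : NCPoly m) : ℝ :=
  P.sum fun w c => ‖c‖ * A ^ w.length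


section Aux

open Finset

variable {m : ℕ}

/-- Auxiliary norm on the tensor square. -/
noncomputable def BNorm (A : ℝ) (T : NCPoly₂ m) : ℝ :=
  T.sum fun rs c => ‖c‖ * A ^ (rs.1.length + rs.2.length)

lemma anorm_eq_sum_subset (A : ℝ) (P : NCPoly m) (s : Finset (Word m))
    (hs : P.support ⊆ s) :
    Anorm A P = ∑ w ∈ s, ‖P w‖ * A ^ w.length := by
  rw [Anorm, Finsupp.sum]
  exact Finset.sum_subset hs fun w _ hw => by
    simp [Finsupp.notMem_support_iff.mp hw]

lemma bnorm_eq_sum_subset (A : ℝ) (T : NCPoly₂ m) (s : Finset (Word m × Word m))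
    (hs : T.support ⊆ s) :
    BNorm A T = ∑ rs ∈ s, ‖T rs‖ * A ^ (rs.1.length + rs.2.length) := by
  rw [BNorm, Finsupp.sum]
  exact Finset.sum_subset hs fun rs _ hrs => by
    simp [Finsupp.notMem_support_iff.mp hrs]

lemma anorm_nonneg {A : ℝ} (hA : 0 ≤ A) (P : NCPoly m) : 0 ≤ Anorm A P :=
  Finset.sum_nonneg fun w _ => mul_nonneg (norm_nonneg _) (pow_nonneg hA _)

lemma anorm_zero (A : ℝ) : Anorm A (0 : NCPoly m) = 0 := by simp [Anorm]

lemma bnorm_zero (A : ℝ) : BNorm A (0 : NCPoly₂ m) = 0 := by simp [BNorm]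

lemma anorm_add_le {A : ℝ} (hA : 0 ≤ A) (P Q : NCPoly m) :
    Anorm A (P + Q) ≤ Anorm A P + Anorm A Q := by
  rw [anorm_eq_sum_subset A (P + Q) (P.support ∪ Q.support) Finsupp.support_add,
    anorm_eq_sum_subset A P (P.support ∪ Q.support) Finset.subset_union_left,
    anorm_eq_sum_subset A Q (P.support ∪ Q.support) Finset.subset_union_right,
    ← Finset.sum_add_distrib]
  refine Finset.sum_le_sum fun w _ => ?_
  rw [← add_mul]
  exact mul_le_mul_of_nonneg_right
    (by simpa using norm_add_le (P w) (Q w)) (pow_nonneg hA _)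

lemma bnorm_add_le {A : ℝ} (hA : 0 ≤ A) (P Q : NCPoly₂ m) :
    BNorm A (P + Q) ≤ BNorm A P + BNorm A Q := by
  rw [bnorm_eq_sum_subset A (P + Q) (P.support ∪ Q.support) Finsupp.support_add,
    bnorm_eq_sum_subset A P (P.support ∪ Q.support) Finset.subset_union_left,
    bnorm_eq_sum_subset A Q (P.support ∪ Q.support) Finset.subset_union_right,
    ← Finset.sum_add_distrib]
  refine Finset.sum_le_sum fun w _ => ?_
  rw [← add_mul]
  exact mul_le_mul_of_nonneg_right
    (by simpa using norm_add_le (P w) (Q w)) (pow_nonneg hA _)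

lemma anorm_sum_le {A : ℝ} (hA : 0 ≤ A) {ι : Type*} (s : Finset ι)
    (f : ι → NCPoly m) :
    Anorm A (∑ i ∈ s, f i) ≤ ∑ i ∈ s, Anorm A (f i) := by
  classical
  induction s using Finset.induction_on with
  | empty => simp [anorm_zero]
  | insert _ _ hx ih =>
    rw [Finset.sum_insert hx, Finset.sum_insert hx]
    exact le_trans (anorm_add_le hA _ _) (by linarith)

lemma bnorm_sum_le {A : ℝ} (hA : 0 ≤ A) {ι : Type*} (s : Finset ι)
    (f : ι → NCPoly₂ m) :
    BNorm A (∑ i ∈ s, f i) ≤ ∑ i ∈ s, BNorm A (f i) := by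
  classical
  induction s using Finset.induction_on with
  | empty => simp [bnorm_zero]
  | insert _ _ hx ih =>
    rw [Finset.sum_insert hx, Finset.sum_insert hx]
    exact le_trans (bnorm_add_le hA _ _) (by linarith)

lemma anorm_single (A : ℝ) (w : Word m) (c : ℂ) :
    Anorm A (Finsupp.single w c) = ‖c‖ * A ^ w.length := by
  rw [Anorm, Finsupp.sum_single_index]; simp

lemma bnorm_single (A : ℝ) (rs : Word m × Word m) (c : ℂ) :
    BNorm A (Finsupp.single rs c) = ‖c‖ * A ^ (rs.1.length + rs.2.length) := by
  rw [BNorm, Finsupp.sum_single_index]; simp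

lemma anorm_smul (A : ℝ) (c : ℂ) (P : NCPoly m) :
    Anorm A (c • P) = ‖c‖ * Anorm A P := by
  rw [anorm_eq_sum_subset A (c • P) P.support (Finsupp.support_smul),
    Anorm, Finsupp.sum, Finset.mul_sum]
  refine Finset.sum_congr rfl fun w _ => ?_
  simp [Finsupp.smul_apply, norm_mul, mul_assoc]

lemma bnorm_smul (A : ℝ) (c : ℂ) (T : NCPoly₂ m) :
    BNorm A (c • T) = ‖c‖ * BNorm A T := by
  rw [bnorm_eq_sum_subset A (c • T) T.support (Finsupp.support_smul),
    BNorm, Finsupp.sum, Finset.mul_sum]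
  refine Finset.sum_congr rfl fun rs _ => ?_
  simp [Finsupp.smul_apply, norm_mul, mul_assoc]

lemma anorm_sharp_le {A : ℝ} (hA : 0 ≤ A) (T : NCPoly₂ m) (Q : NCPoly m) :
    Anorm A (sharp T Q) ≤ BNorm A T * Anorm A Q := by
  rw [sharp, Finsupp.sum]
  refine le_trans (anorm_sum_le hA _ _) ?_
  rw [BNorm, Finsupp.sum, Finset.sum_mul]
  refine Finset.sum_le_sum fun rs _ => ?_
  rw [Finsupp.sum]
  refine le_trans (anorm_sum_le hA _ _) ?_
  rw [Anorm, Finsupp.sum, Finset.mul_sum]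
  refine le_of_eq (Finset.sum_congr rfl fun u _ => ?_)
  rw [anorm_single]
  simp only [List.length_append, norm_mul]
  ring

/-- Real-valued count of the letter `k` in the word `w`. -/
noncomputable def cntR (k : Fin m) (w : Word m) : ℝ :=
  ∑ i : Fin w.length, if w.get i = k then 1 else 0

lemma cntR_nonneg (k : Fin m) (w : Word m) : 0 ≤ cntR k w :=
  Finset.sum_nonneg fun i _ => by split <;> norm_num

lemma sum_cntR (w : Word m) : ∑ k : Fin m, cntR k w = (w.length : ℝ) := by
  simp only [cntR]; rw [Finset.sum_comm]
  have : ∀ i : Fin w.length, (∑ k : Fin m, if w.get i = k then (1:ℝ) else 0) = 1 := by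
    intro i
    simp
  rw [Finset.sum_congr rfl fun i _ => this i]
  simp

lemma cntR_le (k : Fin m) (w : Word m) : cntR k w ≤ (w.length : ℝ) := by
  rw [← sum_cntR w]
  exact Finset.single_le_sum (fun k _ => cntR_nonneg k w) (Finset.mem_univ k)

lemma bnorm_derW_le {A : ℝ} (hA : 0 ≤ A) (k : Fin m) (w : Word m) :
    BNorm A (derW k w) ≤ cntR k w * A ^ (w.length - 1) := by
  rw [derW]
  refine le_trans (bnorm_sum_le hA _ _) ?_
  unfold cntR; rw [Finset.sum_mul]
  refine le_of_eq (Finset.sum_congr rfl fun i _ => ?_)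
  split
  · rw [bnorm_single]
    simp only [norm_one, one_mul, List.length_take, List.length_drop]
    congr 1
    have := i.isLt
    omega
  · rw [bnorm_zero, zero_mul]

lemma anorm_cderW_le {A : ℝ} (hA : 0 ≤ A) (k : Fin m) (w : Word m) :
    Anorm A (cderW k w) ≤ cntR k w * A ^ (w.length - 1) := by
  rw [cderW]
  refine le_trans (anorm_sum_le hA _ _) ?_
  unfold cntR; rw [Finset.sum_mul]
  refine le_of_eq (Finset.sum_congr rfl fun i _ => ?_)
  split
  · rw [anorm_single]
    simp only [norm_one, one_mul, List.length_append, List.length_take, List.length_drop]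
    congr 1
    have := i.isLt
    omega
  · rw [anorm_zero, zero_mul]

lemma der_single (k : Fin m) (w : Word m) (c : ℂ) :
    der k (Finsupp.single w c) = c • derW k w := by
  rw [der, Finsupp.lsum_single, LinearMap.toSpanSingleton_apply]

lemma cder_single (k : Fin m) (w : Word m) (c : ℂ) :
    cder k (Finsupp.single w c) = c • cderW k w := by
  rw [cder, Finsupp.lsum_single, LinearMap.toSpanSingleton_apply]

lemma sig_single (w : Word m) (c : ℂ) (hw : w ≠ []) :
    sig (Finsupp.single w c) = (c * (w.length : ℂ)⁻¹) • Finsupp.single w 1 := by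
  rw [sig, Finsupp.lsum_single, LinearMap.toSpanSingleton_apply]
  rw [if_neg (by simpa using hw), smul_smul]

lemma anorm_proj0_le {A : ℝ} (hA : 0 ≤ A) (P : NCPoly m) :
    Anorm A (proj0 P) ≤ Anorm A P := by
  have hsupp : (proj0 P).support ⊆ insert [] P.support := by
    intro w hw
    rcases eq_or_ne w [] with h | h
    · simp [h]
    · refine Finset.mem_insert_of_mem ?_
      rw [Finsupp.mem_support_iff] at hw ⊢
      intro h0
      apply hw
      simp [proj0, h0, Finsupp.single_apply, Ne.symm h]
  rw [anorm_eq_sum_subset A (proj0 P) _ hsupp,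
    anorm_eq_sum_subset A P (insert [] P.support) (Finset.subset_insert _ _)]
  refine Finset.sum_le_sum fun w _ => ?_
  refine mul_le_mul_of_nonneg_right ?_ (pow_nonneg hA _)
  rcases eq_or_ne w [] with h | h
  · subst h
    simp [proj0]
  · have : proj0 P w = P w := by
      simp [proj0, Finsupp.single_apply, Ne.symm h]
    rw [this]

lemma der_sig_single (k : Fin m) (w : Word m) (c : ℂ) (hw : w ≠ []) :
    der k (sig (Finsupp.single w c)) = (c * (w.length : ℂ)⁻¹) • derW k w := by
  rw [sig_single w c hw, map_smul, der_single, one_smul]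

end Aux

/-- for `V = Σ_j t_j q_j` with monomials `q_j` of degree at most `D`
and `B = Σ_j deg q_j` the total number of monomials of the cyclic derivatives
`D_1 V, …, D_m V`, the operator `Ξ₁` satisfies `‖Ξ₁‖_A ≤ |t| B A^{D-2}`; in
particular `‖Ξ₁‖_A ≤ ε` whenever `|t| < ε / (B A^{D-2})`. -/
theorem Xi1_norm_bound (m n D : ℕ) (A : ℝ) (hA : 1 < A)
    (t : Fin n → ℂ) (q : Fin n → Word m) (hdeg : ∀ j, (q j).length ≤ D)
    (tmax : ℝ) (ht : ∀ j, ‖t j‖ ≤ tmax) :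
    (∀ P : NCPoly m, P [] = 0 →
        Anorm A (Xi1 (∑ j, t j • Finsupp.single (q j) 1) P) ≤
          tmax * (∑ j, ((q j).length : ℝ)) * A ^ D / A ^ 2 * Anorm A P)
    ∧ ∀ ε : ℝ, 0 < ε → tmax * (∑ j, ((q j).length : ℝ)) * A ^ D / A ^ 2 < ε →
        ∀ P : NCPoly m, P [] = 0 →
          Anorm A (Xi1 (∑ j, t j • Finsupp.single (q j) 1) P) ≤ ε * Anorm A P := by
  have hA0 : (0:ℝ) ≤ A := le_trans zero_le_one hA.le
  have hApos : (0:ℝ) < A := lt_trans zero_lt_one hA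
  have hAne : A ≠ 0 := ne_of_gt hApos
  set V : NCPoly m := ∑ j, t j • Finsupp.single (q j) 1 with hV
  -- bound on the cyclic derivative of V
  have hcderV : ∀ k, cder k V = ∑ j, t j • cderW k (q j) := by
    intro k
    rw [hV, map_sum]
    exact Finset.sum_congr rfl fun j _ => by
      rw [map_smul, cder_single, one_smul]
  have hcder_norm : ∀ k : Fin m, Anorm A (cder k V) ≤
      ∑ j, ‖t j‖ * (cntR k (q j) * A ^ ((q j).length - 1)) := by
    intro k
    rw [hcderV]
    refine le_trans (anorm_sum_le hA0 _ _) (Finset.sum_le_sum fun j _ => ?_)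
    rw [anorm_smul]
    exact mul_le_mul_of_nonneg_left (anorm_cderW_le hA0 _ _) (norm_nonneg _)
  -- key real inequality on degrees
  have hkey : ∀ j : Fin n, ((q j).length : ℝ) * A ^ ((q j).length - 1) ≤
      ((q j).length : ℝ) * A ^ D / A := by
    intro j
    rcases Nat.eq_zero_or_pos (q j).length with h0 | hpos
    · simp [h0]
    · rw [le_div_iff₀ hApos, mul_assoc, ← pow_succ]
      have : (q j).length - 1 + 1 = (q j).length := by omega
      rw [this]
      exact mul_le_mul_of_nonneg_left (pow_le_pow_right₀ hA.le (hdeg j)) (Nat.cast_nonneg _)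
  have main : ∀ P : NCPoly m, P [] = 0 →
      Anorm A (Xi1 V P) ≤
        tmax * (∑ j, ((q j).length : ℝ)) * A ^ D / A ^ 2 * Anorm A P := by
    intro P hP0
    have hwne : ∀ w ∈ P.support, ((w : Word m).length : ℝ) ≠ 0 := by
      intro w hw
      have : w ≠ [] := by
        rintro rfl
        exact (Finsupp.mem_support_iff.mp hw) hP0
      simpa using fun h => this (List.length_eq_zero_iff.mp h)
    -- decompose ∂ₖΣP
    have hdec : ∀ k : Fin m, der k (sig P) =
        ∑ w ∈ P.support, (P w * (w.length : ℂ)⁻¹) • derW k w := by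
      intro k
      conv_lhs => rw [← Finsupp.sum_single P]
      rw [Finsupp.sum, map_sum, map_sum]
      refine Finset.sum_congr rfl fun w hw => ?_
      refine der_sig_single k w (P w) ?_
      rintro rfl
      exact (Finsupp.mem_support_iff.mp hw) hP0
    have hder_norm : ∀ k : Fin m, BNorm A (der k (sig P)) ≤
        ∑ w ∈ P.support,
          ‖P w‖ * ((w.length : ℝ))⁻¹ * (cntR k w * A ^ (w.length - 1)) := by
      intro k
      rw [hdec k]
      refine le_trans (bnorm_sum_le hA0 _ _) (Finset.sum_le_sum fun w hw => ?_)
      rw [bnorm_smul, norm_mul, norm_inv, Complex.norm_natCast]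
      exact mul_le_mul_of_nonneg_left (bnorm_derW_le hA0 k w)
        (mul_nonneg (norm_nonneg _) (inv_nonneg.mpr (Nat.cast_nonneg _)))
    -- first steps of the chain
    have step1 : Anorm A (Xi1 V P) ≤
        ∑ k : Fin m, BNorm A (der k (sig P)) * Anorm A (cder k V) := by
      rw [Xi1]
      refine le_trans (anorm_proj0_le hA0 _) ?_
      refine le_trans (anorm_sum_le hA0 _ _) (Finset.sum_le_sum fun k _ => ?_)
      exact anorm_sharp_le hA0 _ _
    have step2 : ∑ k : Fin m, BNorm A (der k (sig P)) * Anorm A (cder k V) ≤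
        ∑ k : Fin m,
          (∑ w ∈ P.support,
            ‖P w‖ * ((w.length : ℝ))⁻¹ * (cntR k w * A ^ (w.length - 1))) *
          (∑ j, ‖t j‖ * (cntR k (q j) * A ^ ((q j).length - 1))) := by
      refine Finset.sum_le_sum fun k _ => ?_
      refine mul_le_mul (hder_norm k) (hcder_norm k) (anorm_nonneg hA0 _) ?_
      refine Finset.sum_nonneg fun w _ => ?_
      have h1 : (0:ℝ) ≤ ‖P w‖ * ((w.length : ℝ))⁻¹ :=
        mul_nonneg (norm_nonneg _) (inv_nonneg.mpr (Nat.cast_nonneg _))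
      exact mul_nonneg h1 (mul_nonneg (cntR_nonneg _ _) (pow_nonneg hA0 _))
    -- reorder the triple sum
    have step3 : ∑ k : Fin m,
          (∑ w ∈ P.support,
            ‖P w‖ * ((w.length : ℝ))⁻¹ * (cntR k w * A ^ (w.length - 1))) *
          (∑ j, ‖t j‖ * (cntR k (q j) * A ^ ((q j).length - 1)))
        = ∑ w ∈ P.support, ∑ j, ∑ k : Fin m,
            (‖P w‖ * ((w.length : ℝ))⁻¹ * (cntR k w * A ^ (w.length - 1))) *
            (‖t j‖ * (cntR k (q j) * A ^ ((q j).length - 1))) := by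
      rw [Finset.sum_congr rfl fun k _ => Finset.sum_mul_sum _ _ _ _, Finset.sum_comm]
      exact Finset.sum_congr rfl fun w _ => Finset.sum_comm
    -- per-term bound
    have step4 : ∀ w ∈ P.support, ∀ j : Fin n,
        (∑ k : Fin m,
          (‖P w‖ * ((w.length : ℝ))⁻¹ * (cntR k w * A ^ (w.length - 1))) *
          (‖t j‖ * (cntR k (q j) * A ^ ((q j).length - 1)))) ≤
        (‖P w‖ * A ^ w.length) *
          (tmax * ((q j).length : ℝ) * A ^ D / A ^ 2) := by
      intro w hw j
      have hlw := hwne w hw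
      have hlw1 : w.length - 1 + 1 = w.length := by
        have : w.length ≠ 0 := by exact_mod_cast hlw
        omega
      have htm : (0:ℝ) ≤ tmax := le_trans (norm_nonneg _) (ht j)
      have h1 : ∑ k : Fin m,
          (‖P w‖ * ((w.length : ℝ))⁻¹ * (cntR k w * A ^ (w.length - 1))) *
          (‖t j‖ * (cntR k (q j) * A ^ ((q j).length - 1)))
          = (‖P w‖ * ((w.length : ℝ))⁻¹ * A ^ (w.length - 1) *
              (‖t j‖ * A ^ ((q j).length - 1))) *
            ∑ k : Fin m, cntR k w * cntR k (q j) := by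
        rw [Finset.mul_sum]
        exact Finset.sum_congr rfl fun k _ => by ring
      have h2 : ∑ k : Fin m, cntR k w * cntR k (q j) ≤
          (w.length : ℝ) * ((q j).length : ℝ) := by
        refine le_trans (Finset.sum_le_sum fun k _ =>
          mul_le_mul_of_nonneg_left (cntR_le k (q j)) (cntR_nonneg k w)) ?_
        rw [← Finset.sum_mul, sum_cntR]
      have hc0 : (0:ℝ) ≤ ‖P w‖ * ((w.length : ℝ))⁻¹ * A ^ (w.length - 1) *
          (‖t j‖ * A ^ ((q j).length - 1)) := by positivity
      have h3 : (‖P w‖ * ((w.length : ℝ))⁻¹ * A ^ (w.length - 1) *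
            (‖t j‖ * A ^ ((q j).length - 1))) *
            ((w.length : ℝ) * ((q j).length : ℝ))
          = (‖P w‖ * A ^ (w.length - 1)) *
            (‖t j‖ * (((q j).length : ℝ) * A ^ ((q j).length - 1))) := by
        field_simp
      have h4 : ‖t j‖ * (((q j).length : ℝ) * A ^ ((q j).length - 1)) ≤
          tmax * (((q j).length : ℝ) * A ^ D / A) := by
        refine mul_le_mul (ht j) (hkey j) ?_ htm
        positivity
      have h5 : (‖P w‖ * A ^ w.length) *
          (tmax * ((q j).length : ℝ) * A ^ D / A ^ 2)
          = (‖P w‖ * A ^ (w.length - 1)) *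
            (tmax * (((q j).length : ℝ) * A ^ D / A)) := by
        have hpow : A ^ w.length = A ^ (w.length - 1) * A := by
          rw [← pow_succ, hlw1]
        rw [hpow]
        field_simp
      calc ∑ k : Fin m,
            (‖P w‖ * ((w.length : ℝ))⁻¹ * (cntR k w * A ^ (w.length - 1))) *
            (‖t j‖ * (cntR k (q j) * A ^ ((q j).length - 1)))
          = _ := h1
        _ ≤ (‖P w‖ * ((w.length : ℝ))⁻¹ * A ^ (w.length - 1) *
              (‖t j‖ * A ^ ((q j).length - 1))) *
            ((w.length : ℝ) * ((q j).length : ℝ)) :=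
          mul_le_mul_of_nonneg_left h2 hc0
        _ = (‖P w‖ * A ^ (w.length - 1)) *
            (‖t j‖ * (((q j).length : ℝ) * A ^ ((q j).length - 1))) := h3
        _ ≤ (‖P w‖ * A ^ (w.length - 1)) *
            (tmax * (((q j).length : ℝ) * A ^ D / A)) :=
          mul_le_mul_of_nonneg_left h4 (by positivity)
        _ = (‖P w‖ * A ^ w.length) *
            (tmax * ((q j).length : ℝ) * A ^ D / A ^ 2) := h5.symm
    -- collect the sums
    have hcollect : ∑ w ∈ P.support, ∑ j,
        (‖P w‖ * A ^ w.length) * (tmax * ((q j).length : ℝ) * A ^ D / A ^ 2)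
        = tmax * (∑ j, ((q j).length : ℝ)) * A ^ D / A ^ 2 * Anorm A P := by
      rw [← Finset.sum_mul_sum]
      rw [Anorm, Finsupp.sum]
      rw [mul_comm]
      congr 1
      rw [Finset.mul_sum, Finset.sum_mul, Finset.sum_div]
    calc Anorm A (Xi1 V P) ≤ _ := step1
      _ ≤ _ := step2
      _ = _ := step3
      _ ≤ ∑ w ∈ P.support, ∑ j,
            (‖P w‖ * A ^ w.length) *
            (tmax * ((q j).length : ℝ) * A ^ D / A ^ 2) :=
        Finset.sum_le_sum fun w hw => Finset.sum_le_sum fun j _ => step4 w hw j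
      _ = _ := hcollect
  refine ⟨main, fun ε hε hlt P hP0 => ?_⟩
  exact le_trans (main P hP0)
    (mul_le_mul_of_nonneg_right hlt.le (anorm_nonneg hA0 P))
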